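/- For each f ∈ C(K), the function Ψ(f) on K defined by Ψ(f)(x) = Φ(f_U)(x) for x ∈ U and Ψ(f)(x) = f(x) for x ∈ ∂U is continuous on K. -/

import Mathlib

open MeasureTheory Filter Topology ComplexOrder

private lemma integrable_of_bdd {α : Type*} [MeasurableSpace α] (P : Measure α)
    [IsFiniteMeasure P] {E : Type*} [NormedAddCommGroup E] {g : α → E}
    (hg : AEStronglyMeasurable g P) (C : ℝ) (hb : ∀ v, ‖g v‖ ≤ C) : Integrable g P :=
  (integrable_const C).mono' hg (Filter.Eventually.of_forall hb)


/-- `Φ` is a Markov operator on the bounded Borel measurable functions on `U`: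
for each `x` there is a Borel probability measure `P x` representing `Φ` at `x`. -/
def IsMarkovOperator {U : Type*} [MeasurableSpace U]
    (Φ : (U → ℂ) → (U → ℂ)) : Prop :=
  ∀ x : U, ∃ P : Measure U, IsProbabilityMeasure P ∧
    ∀ f : U → ℂ, Measurable f → (∃ C : ℝ, ∀ y, ‖f y‖ ≤ C) →
      Φ f x = ∫ y, f y ∂P

/-- `Φ` has the strong Feller property: it maps bounded Borel measurable
functions to continuous functions. -/
def HasStrongFeller {U : Type*} [MeasurableSpace U] [TopologicalSpace U]
    (Φ : (U → ℂ) → (U → ℂ)) : Prop :=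
  ∀ f : U → ℂ, Measurable f → (∃ C : ℝ, ∀ y, ‖f y‖ ≤ C) → Continuous (Φ f)

/-- Boundary condition (A): for each boundary point `x` there is a barrier
`h ∈ C(K)` with `h x = 0`, `h < 0` off `x`, and `Φ (h_U) ≥ h_U` on `U`. -/
def CondA {K : Type*} [TopologicalSpace K] (U : Set K)
    (Φ : (↥U → ℂ) → (↥U → ℂ)) : Prop :=
  ∀ x ∈ Uᶜ, ∃ h : C(K, ℂ), h x = 0 ∧ (∀ y : K, y ≠ x → h y < 0) ∧
    ∀ u : ↥U, h u.1 ≤ Φ (fun v : ↥U => h v.1) u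

/-- Maximum principle (B): every real-valued `g ∈ C(K)` with `Φ (g_U) ≥ g_U`
on `U` attaining its global maximum inside `U` is constant. -/
def CondB {K : Type*} [TopologicalSpace K] (U : Set K)
    (Φ : (↥U → ℂ) → (↥U → ℂ)) : Prop :=
  ∀ g : C(K, ℂ), (∀ x : K, (g x).im = 0) →
    (∀ u : ↥U, g u.1 ≤ Φ (fun v : ↥U => g v.1) u) →
    (∃ z ∈ U, ∀ x : K, g x ≤ g z) →
    ∀ x y : K, g x = g y

/-- The map `Ψ` : `Ψ f = Φ (f_U)` on `U` and `Ψ f = f` on `∂U = K \ U`. -/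
noncomputable def psiFun {K : Type*} (U : Set K)
    (Φ : (↥U → ℂ) → (↥U → ℂ)) (f : K → ℂ) : K → ℂ :=
  open Classical in fun x => if hx : x ∈ U then Φ (fun v : ↥U => f v.1) ⟨x, hx⟩ else f x

/-- For each `f ∈ C(K)` the function `Ψ f`, equal to `Φ (f_U)`
on `U` and to `f` on `∂U`, is continuous on `K`. -/
theorem stmt5 {K : Type*} [MetricSpace K] [CompactSpace K]
    [MeasurableSpace K] [BorelSpace K]
    (U : Set K) (hUopen : IsOpen U) (hUdense : Dense U)
    (hbd : ∃ a b : K, a ∈ Uᶜ ∧ b ∈ Uᶜ ∧ a ≠ b)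
    (Φ : (↥U → ℂ) → (↥U → ℂ))
    (hM : IsMarkovOperator Φ) (hSF : HasStrongFeller Φ)
    (hA : CondA U Φ)
    (f : C(K, ℂ)) :
    Continuous (psiFun U Φ ⇑f) := by
  classical
  obtain ⟨a, b, ha, hb', hab⟩ := hbd
  haveI hKne : Nonempty K := ⟨a⟩
  -- bound on f
  obtain ⟨z0, -, hz0⟩ := isCompact_univ.exists_isMaxOn Set.univ_nonempty
    f.continuous.norm.continuousOn
  set C : ℝ := ‖f z0‖ with hCdef
  have hC0 : 0 ≤ C := norm_nonneg _
  have hC : ∀ y : K, ‖f y‖ ≤ C := fun y => hz0 (Set.mem_univ y)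
  set fU : ↥U → ℂ := fun v => f v.1 with hfU
  have hfUcont : Continuous fU := f.continuous.comp continuous_subtype_val
  have hfUmeas : Measurable fU := hfUcont.measurable
  have hfUbd : ∃ B : ℝ, ∀ v : ↥U, ‖fU v‖ ≤ B := ⟨C, fun v => hC v.1⟩
  rw [continuous_iff_continuousAt]
  intro x
  by_cases hx : x ∈ U
  · -- interior point: strong Feller
    have hco : ContinuousOn (psiFun U Φ ⇑f) U := by
      rw [continuousOn_iff_continuous_restrict]
      have he : U.restrict (psiFun U Φ ⇑f) = Φ fU := by
        funext u
        exact dif_pos u.2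
      rw [show U.domRestrict (psiFun U Φ ⇑f) = Φ fU from he]
      exact hSF fU hfUmeas hfUbd
    exact hco.continuousAt (hUopen.mem_nhds hx)
  · -- boundary point
    obtain ⟨h, hh0, hhneg, hΦh⟩ := hA x hx
    set hr : K → ℝ := fun y => (h y).re with hhr
    have hrcont : Continuous hr := Complex.continuous_re.comp h.continuous
    have hrx : hr x = 0 := by simp [hhr, hh0]
    have hrneg : ∀ y : K, y ≠ x → hr y < 0 := by
      intro y hy
      have := (Complex.lt_def.mp (hhneg y hy)).1
      simpa [hhr] using this
    have hrle0 : ∀ y : K, hr y ≤ 0 := by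
      intro y
      by_cases hy : y = x
      · simp [hy, hrx]
      · exact (hrneg y hy).le
    have hrbd : ∀ v : ↥U, ‖(fun w : ↥U => hr w.1) v‖ ≤ ‖h‖ := fun v =>
      le_trans (by simpa [hhr] using Complex.abs_re_le_norm (h v.1))
        (h.norm_coe_le_norm v.1)
    rw [Metric.continuousAt_iff]
    intro ε hε
    -- continuity of f at x
    obtain ⟨δ₁, hδ₁pos, hδ₁⟩ := Metric.continuousAt_iff.mp (f.continuous.continuousAt (x := x))
      (ε / 2) (by linarith)
    set S : Set K := (Metric.ball x δ₁)ᶜ with hS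
    have hSclosed : IsClosed S := Metric.isOpen_ball.isClosed_compl
    have hxnS : x ∉ S := by simp [hS, Metric.mem_ball, hδ₁pos]
    -- barrier is bounded away from 0 on S
    obtain ⟨c, hcpos, hcS⟩ : ∃ c : ℝ, 0 < c ∧ ∀ y ∈ S, hr y ≤ -c := by
      by_cases hSne : S.Nonempty
      · obtain ⟨y0, hy0S, hy0max⟩ := hSclosed.isCompact.exists_isMaxOn hSne
          hrcont.continuousOn
        refine ⟨-hr y0, ?_, fun y hy => by simpa using hy0max hy⟩
        have hne : y0 ≠ x := fun e => hxnS (e ▸ hy0S)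
        simpa using hrneg y0 hne
      · exact ⟨1, one_pos, fun y hy => absurd ⟨y, hy⟩ hSne⟩
    have hD : (0:ℝ) < 2 * (2 * C + 1) := by nlinarith
    set τ : ℝ := c * ε / (2 * (2 * C + 1)) with hτdef
    have hτpos : 0 < τ := div_pos (mul_pos hcpos hε) hD
    -- continuity of hr at x
    obtain ⟨δ₂, hδ₂pos, hδ₂⟩ := Metric.continuousAt_iff.mp (hrcont.continuousAt (x := x))
      τ hτpos
    refine ⟨min δ₁ δ₂, lt_min hδ₁pos hδ₂pos, ?_⟩
    intro y hy
    have hy1 : dist y x < δ₁ := lt_of_lt_of_le hy (min_le_left _ _)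
    have hy2 : dist y x < δ₂ := lt_of_lt_of_le hy (min_le_right _ _)
    have hψx : psiFun U Φ ⇑f x = f x := dif_neg hx
    by_cases hyU : y ∈ U
    · -- main estimate
      have hψy : psiFun U Φ ⇑f y = Φ fU ⟨y, hyU⟩ := dif_pos hyU
      set u : ↥U := ⟨y, hyU⟩ with hu
      have hτy : -hr y < τ := by
        have h2 := hδ₂ hy2
        rw [hrx, dist_zero_right, Real.norm_eq_abs] at h2
        exact lt_of_le_of_lt (neg_le_abs _) h2
      obtain ⟨P, hPprob, hPrep⟩ := hM u
      haveI := hPprob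
      set S' : Set ↥U := Subtype.val ⁻¹' S with hS'
      have hS'meas : MeasurableSet S' :=
        hSclosed.measurableSet.preimage measurable_subtype_coe
      -- integrability facts
      have hint_h : Integrable (fun v : ↥U => h v.1) P :=
        integrable_of_bdd P
          ((h.continuous.comp continuous_subtype_val).aestronglyMeasurable)
          ‖h‖ (fun v => h.norm_coe_le_norm v.1)
      have hint_hr : Integrable (fun v : ↥U => hr v.1) P :=
        integrable_of_bdd P ((hrcont.comp continuous_subtype_val).aestronglyMeasurable)
          ‖h‖ hrbd
      have hint_ind : Integrable (S'.indicator (fun _ => (-c : ℝ))) P :=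
        (integrable_const _).indicator hS'meas
      have hint_f : Integrable fU P :=
        integrable_of_bdd P hfUcont.aestronglyMeasurable C (fun v => hC v.1)
      -- step 1 : P S' is small
      have hPnn : 0 ≤ (P S').toReal := ENNReal.toReal_nonneg
      have hPS' : (P S').toReal * c ≤ -hr y := by
        have e1 : Φ (fun v : ↥U => h v.1) u = ∫ v, h v.1 ∂P :=
          hPrep _ (h.continuous.comp continuous_subtype_val).measurable
            ⟨‖h‖, fun v => h.norm_coe_le_norm v.1⟩
        have e2 : hr y ≤ (∫ v, h v.1 ∂P).re := by
          have e := (Complex.le_def.mp (hΦh u)).1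
          rw [e1] at e
          exact e
        have e3 : (∫ v, h v.1 ∂P).re = ∫ v, hr v.1 ∂P := by
          have e := integral_re (μ := P) (f := fun v : ↥U => h v.1) hint_h
          simp only [RCLike.re_to_complex] at e
          exact e.symm
        have e4 : ∫ v, hr v.1 ∂P ≤ ∫ v, S'.indicator (fun _ => (-c : ℝ)) v ∂P := by
          apply integral_mono hint_hr hint_ind
          intro v
          by_cases hv : v ∈ S'
          · simpa [Set.indicator_of_mem hv] using hcS v.1 hv
          · simpa [Set.indicator_of_notMem hv] using hrle0 v.1
        have e5 : ∫ v, S'.indicator (fun _ => (-c : ℝ)) v ∂P = (P S').toReal * (-c) := by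
          rw [integral_indicator_const _ hS'meas, smul_eq_mul]; rfl
        have : hr y ≤ (P S').toReal * (-c) := by
          rw [← e5]
          exact le_trans (e3 ▸ e2) e4
        linarith
      have hPS'small : (P S').toReal * (2 * C + 1) < ε / 2 := by
        have h1 : (P S').toReal * c < τ := lt_of_le_of_lt hPS' hτy
        have hτD : τ * (2 * (2 * C + 1)) = c * ε :=
          div_mul_cancel₀ _ (ne_of_gt hD)
        have h2 : (P S').toReal * c * (2 * (2 * C + 1)) < c * ε := by
          rw [← hτD]
          exact mul_lt_mul_of_pos_right h1 hD
        have h3 : c * ((P S').toReal * (2 * (2 * C + 1))) < c * ε := by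
          calc c * ((P S').toReal * (2 * (2 * C + 1)))
              = (P S').toReal * c * (2 * (2 * C + 1)) := by ring
            _ < c * ε := h2
        have h4 : (P S').toReal * (2 * (2 * C + 1)) < ε :=
          (mul_lt_mul_iff_right₀ hcpos).mp h3
        linarith
      -- step 2 : the integral estimate
      have e1 : Φ fU u = ∫ v, fU v ∂P := hPrep fU hfUmeas hfUbd
      rw [hψy, hψx]
      have hΦu : Φ fU ⟨y, hyU⟩ = ∫ v, fU v ∂P := e1
      rw [hΦu, dist_eq_norm]
      have e2 : ∫ v, fU v ∂P - f x = ∫ v, (fU v - f x) ∂P := by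
        rw [integral_sub hint_f (integrable_const _), integral_const]
        simp
      rw [e2]
      calc ‖∫ v, (fU v - f x) ∂P‖
          ≤ ∫ v, ‖fU v - f x‖ ∂P := norm_integral_le_integral_norm _
        _ ≤ ∫ v, (ε / 2 + S'.indicator (fun _ => 2 * C) v) ∂P := by
            apply integral_mono
            · exact integrable_of_bdd P
                ((hfUcont.sub continuous_const).norm.aestronglyMeasurable)
                (2 * C) (fun v => by
                  rw [Real.norm_eq_abs, abs_of_nonneg (norm_nonneg _)]
                  calc ‖fU v - f x‖ ≤ ‖fU v‖ + ‖f x‖ := norm_sub_le _ _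
                    _ ≤ 2 * C := by have := hC v.1; have := hC x; linarith)
            · exact (integrable_const _).add ((integrable_const _).indicator hS'meas)
            intro v
            show ‖fU v - f x‖ ≤ ε / 2 + S'.indicator (fun _ => 2 * C) v
            by_cases hv : v ∈ S'
            · rw [Set.indicator_of_mem hv]
              calc ‖fU v - f x‖ ≤ ‖fU v‖ + ‖f x‖ := norm_sub_le _ _
                _ ≤ ε / 2 + 2 * C := by
                    have := hC v.1; have := hC x; linarith
            · rw [Set.indicator_of_notMem hv, add_zero]
              have hvball : (v : K) ∈ Metric.ball x δ₁ := by
                by_contra hc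
                exact hv hc
              have := hδ₁ (Metric.mem_ball.mp hvball)
              rw [dist_eq_norm] at this
              exact this.le
        _ = ε / 2 + (P S').toReal * (2 * C) := by
            rw [integral_add (integrable_const _) ((integrable_const _).indicator hS'meas),
              integral_const, integral_indicator_const _ hS'meas, smul_eq_mul]
            simp
            exact Or.inl rfl
        _ < ε := by nlinarith
    · have hψy : psiFun U Φ ⇑f y = f y := dif_neg hyU
      rw [hψy, hψx]
      exact lt_of_lt_of_le (hδ₁ hy1) (by linarith)
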